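/- arXiv:2502.07231 — 3 statements merged into one kernel-verified Lean document; each statement's English description precedes it below -/
import Mathlib

section
/- Let u, v, w be vectors in a real inner product space with w ≠ 0, ‖u‖ ≤ M, ‖v‖ ≤ M, and ⟨w, u⟩ = ⟨w, v⟩ = z. Then ‖u - v‖² ≤ 4M² - 4z²/‖w‖². -/
open RealInnerProductSpace in
theorem stmt_6 {E : Type*} [NormedAddCommGroup E] [InnerProductSpace ℝ E]
    (u v w : E) (M z : ℝ) (hM : 0 ≤ M) (hw : w ≠ 0)
    (hu : ‖u‖ ≤ M) (hv : ‖v‖ ≤ M)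
    (hzu : ⟪w, u⟫ = z) (hzv : ⟪w, v⟫ = z) :
    ‖u - v‖ ^ 2 ≤ 4 * M ^ 2 - 4 * z ^ 2 / ‖w‖ ^ 2 := by
  have hwn : ‖w‖ ≠ 0 := norm_ne_zero_iff.mpr hw
  have hw2 : (0:ℝ) < ‖w‖ ^ 2 := by positivity
  set a : ℝ := z / ‖w‖ ^ 2 with ha
  have key : ∀ x : E, ⟪w, x⟫ = z → ‖x - a • w‖ ^ 2 = ‖x‖ ^ 2 - z ^ 2 / ‖w‖ ^ 2 := by
    intro x hx
    have horth : ⟪a • w, x - a • w⟫ = 0 := by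
      rw [real_inner_smul_left, inner_sub_right, real_inner_smul_right,
        real_inner_self_eq_norm_sq, hx, ha]
      field_simp
      ring
    have hdecomp : ‖x‖ ^ 2 = ‖a • w‖ ^ 2 + ‖x - a • w‖ ^ 2 := by
      have := norm_add_sq_real (a • w) (x - a • w)
      simp only [add_sub_cancel, horth] at this
      linarith
    have hnorm : ‖a • w‖ ^ 2 = z ^ 2 / ‖w‖ ^ 2 := by
      rw [norm_smul, mul_pow, Real.norm_eq_abs, sq_abs, ha]
      field_simp
    rw [hdecomp, hnorm]; ring
  have hku := key u hzu
  have hkv := key v hzv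
  have heq : u - v = (u - a • w) - (v - a • w) := by abel
  have htri : ‖u - v‖ ≤ ‖u - a • w‖ + ‖v - a • w‖ := by
    rw [heq]; exact norm_sub_le _ _
  have h1 : (0:ℝ) ≤ ‖u - a • w‖ := norm_nonneg _
  have h2 : (0:ℝ) ≤ ‖v - a • w‖ := norm_nonneg _
  have h3 : ‖u - v‖ ^ 2 ≤ (‖u - a • w‖ + ‖v - a • w‖) ^ 2 :=
    pow_le_pow_left₀ (norm_nonneg _) htri 2
  have hu2 : ‖u‖ ^ 2 ≤ M ^ 2 := pow_le_pow_left₀ (norm_nonneg _) hu 2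
  have hv2 : ‖v‖ ^ 2 ≤ M ^ 2 := pow_le_pow_left₀ (norm_nonneg _) hv 2
  have hdiv : 4 * z ^ 2 / ‖w‖ ^ 2 = 4 * (z ^ 2 / ‖w‖ ^ 2) := by ring
  rw [hdiv]
  nlinarith [sq_nonneg (‖u - a • w‖ - ‖v - a • w‖)]
end

section
/- Let u, v, w be vectors in a real inner product space with w ≠ 0, ‖u‖ ≤ M, ‖v‖ ≤ M. Suppose σ(⟨w, u⟩) = σ(⟨w, v⟩) = p where σ(z) = 1/(1+exp(-z)) and 0 < p < 1. Then ‖u - v‖² ≤ 4M² - (4/‖w‖²)·(log((1-p)/p))². -/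
lemma sigmoid_inv (z p : ℝ) (hp : 0 < p) (hp1 : p < 1)
    (h : 1 / (1 + Real.exp (-z)) = p) : z = -Real.log ((1 - p) / p) := by
  have hpos : 0 < 1 + Real.exp (-z) := by positivity
  have h1 : 1 + Real.exp (-z) = 1 / p := by
    field_simp at h ⊢; linarith [h]
  have h2 : Real.exp (-z) = (1 - p) / p := by
    rw [eq_div_iff hp.ne']; field_simp at h1; nlinarith [Real.exp_pos (-z)]
  have := Real.log_exp (-z)
  rw [h2] at this
  linarith [this]

open RealInnerProductSpace in
theorem stmt_7 {E : Type*} [NormedAddCommGroup E] [InnerProductSpace ℝ E]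
    (σ : ℝ → ℝ) (hσ : ∀ z, σ z = 1 / (1 + Real.exp (-z)))
    (u v w : E) (M p : ℝ) (hM : 0 ≤ M) (hw : w ≠ 0)
    (hu : ‖u‖ ≤ M) (hv : ‖v‖ ≤ M)
    (hp : 0 < p) (hp1 : p < 1)
    (hpu : σ ⟪w, u⟫ = p) (hpv : σ ⟪w, v⟫ = p) :
    ‖u - v‖ ^ 2 ≤ 4 * M ^ 2 - 4 / ‖w‖ ^ 2 * (Real.log ((1 - p) / p)) ^ 2 := by
  set t := Real.log ((1 - p) / p) with ht
  have hzu : ⟪w, u⟫ = -t := sigmoid_inv _ p hp hp1 (by rw [← hσ]; exact hpu)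
  have hzv : ⟪w, v⟫ = -t := sigmoid_inv _ p hp hp1 (by rw [← hσ]; exact hpv)
  have hwpos : (0:ℝ) < ‖w‖ := norm_pos_iff.mpr hw
  have hcs : |⟪w, u + v⟫| ≤ ‖w‖ * ‖u + v‖ := abs_real_inner_le_norm w (u + v)
  have hsum : ⟪w, u + v⟫ = -2 * t := by rw [inner_add_right, hzu, hzv]; ring
  have hge : 4 * t ^ 2 ≤ ‖w‖ ^ 2 * ‖u + v‖ ^ 2 := by
    have := sq_le_sq' (neg_abs_le _) (le_abs_self _) |>.trans
      (by nlinarith [abs_nonneg ⟪w, u + v⟫] : |⟪w, u + v⟫| ^ 2 ≤ (‖w‖ * ‖u + v‖) ^ 2)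
    rw [hsum] at this; nlinarith [this]
  have hpar : ‖u - v‖ ^ 2 + ‖u + v‖ ^ 2 = 2 * ‖u‖ ^ 2 + 2 * ‖v‖ ^ 2 := by
    have := parallelogram_law_with_norm ℝ u v
    nlinarith [this]
  have hsum2 : ‖u + v‖ ^ 2 ≥ 4 * t ^ 2 / ‖w‖ ^ 2 := by
    rw [ge_iff_le, div_le_iff₀ (by positivity)]; nlinarith [hge]
  have hnorms : ‖u‖ ^ 2 ≤ M ^ 2 := by nlinarith [norm_nonneg u]
  have hnorms' : ‖v‖ ^ 2 ≤ M ^ 2 := by nlinarith [norm_nonneg v]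
  have : (4:ℝ) / ‖w‖ ^ 2 * t ^ 2 = 4 * t ^ 2 / ‖w‖ ^ 2 := by ring
  rw [this]; linarith
end

section
/- Under the hypotheses of Theorem 1, if additionally |log((1-p)/p)| ≥ M·‖w‖·√(1-ε) for some ε ∈ [0,1], then ‖u - v‖² ≤ 4M²ε. -/
open RealInnerProductSpace in
theorem stmt_10 {E : Type*} [NormedAddCommGroup E] [InnerProductSpace ℝ E]
    (σ : ℝ → ℝ) (hσ : ∀ z, σ z = 1 / (1 + Real.exp (-z)))
    (u v w : E) (M p ε : ℝ) (hM : 0 ≤ M) (hw : w ≠ 0)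
    (hu : ‖u‖ ≤ M) (hv : ‖v‖ ≤ M)
    (hp : 0 < p) (hp1 : p < 1)
    (hpu : σ ⟪w, u⟫ = p) (hpv : σ ⟪w, v⟫ = p)
    (hε0 : 0 ≤ ε) (hε1 : ε ≤ 1)
    (hlog : M * ‖w‖ * Real.sqrt (1 - ε) ≤ |Real.log ((1 - p) / p)|) :
    ‖u - v‖ ^ 2 ≤ 4 * M ^ 2 * ε := by
  set L := Real.log ((1 - p) / p) with hL
  have htu : ⟪w, u⟫ = -L := sigmoid_inv _ p hp hp1 (by rw [← hσ]; exact hpu)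
  have htv : ⟪w, v⟫ = -L := sigmoid_inv _ p hp hp1 (by rw [← hσ]; exact hpv)
  set t : ℝ := -L with ht
  have habs : |t| = |L| := abs_neg L
  have hwn : (0:ℝ) < ‖w‖ := norm_pos_iff.mpr hw
  -- t² ≥ M²‖w‖²(1-ε)
  have hsq : M ^ 2 * ‖w‖ ^ 2 * (1 - ε) ≤ t ^ 2 := by
    have h1 : (M * ‖w‖ * Real.sqrt (1 - ε)) ^ 2 ≤ |t| ^ 2 := by
      apply pow_le_pow_left₀ (by positivity) (habs ▸ hlog)
    have h2 : (M * ‖w‖ * Real.sqrt (1 - ε)) ^ 2 = M ^ 2 * ‖w‖ ^ 2 * (1 - ε) := by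
      rw [mul_pow, mul_pow, Real.sq_sqrt (by linarith)]
    rw [h2, sq_abs] at h1
    exact h1
  set c : ℝ := t / ‖w‖ ^ 2 with hc
  -- key bound on perpendicular components
  have key : ∀ x : E, ‖x‖ ≤ M → ⟪w, x⟫ = t → ‖x - c • w‖ ≤ Real.sqrt (M ^ 2 * ε) := by
    intro x hx hxt
    have hexp : ‖x - c • w‖ ^ 2 = ‖x‖ ^ 2 - t ^ 2 / ‖w‖ ^ 2 := by
      have := norm_sub_sq_real x (c • w)
      rw [real_inner_smul_right, norm_smul, real_inner_comm, hxt] at this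
      rw [this, hc]
      have : ‖w‖ ^ 2 ≠ 0 := by positivity
      field_simp
      rw [Real.norm_eq_abs, sq_abs, div_pow, ← pow_mul]
      field_simp
      ring
    have hb : ‖x - c • w‖ ^ 2 ≤ M ^ 2 * ε := by
      rw [hexp]
      have h3 : M ^ 2 * (1 - ε) ≤ t ^ 2 / ‖w‖ ^ 2 := by
        rw [le_div_iff₀ (by positivity)]
        nlinarith
      nlinarith [pow_le_pow_left₀ (norm_nonneg x) hx 2]
    calc ‖x - c • w‖ = Real.sqrt (‖x - c • w‖ ^ 2) := by
          rw [Real.sqrt_sq (norm_nonneg _)]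
      _ ≤ Real.sqrt (M ^ 2 * ε) := Real.sqrt_le_sqrt hb
  have hu' := key u hu htu
  have hv' := key v hv htv
  have htri : ‖u - v‖ ≤ 2 * Real.sqrt (M ^ 2 * ε) := by
    have : u - v = (u - c • w) - (v - c • w) := by abel
    rw [this]
    calc ‖(u - c • w) - (v - c • w)‖ ≤ ‖u - c • w‖ + ‖v - c • w‖ := norm_sub_le _ _
      _ ≤ 2 * Real.sqrt (M ^ 2 * ε) := by linarith
  have : ‖u - v‖ ^ 2 ≤ (2 * Real.sqrt (M ^ 2 * ε)) ^ 2 :=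
    pow_le_pow_left₀ (norm_nonneg _) htri 2
  calc ‖u - v‖ ^ 2 ≤ (2 * Real.sqrt (M ^ 2 * ε)) ^ 2 := this
    _ = 4 * (Real.sqrt (M ^ 2 * ε)) ^ 2 := by ring
    _ = 4 * (M ^ 2 * ε) := by rw [Real.sq_sqrt (by positivity)]
    _ = 4 * M ^ 2 * ε := by ring
end
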